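/- Let V satisfy the condition (V-scaling) on (0,∞), extend V to all of ℝ by setting V(u) = 0 for u ≤ 0, and assume V is subadditive on [0,∞), i.e. V(x + y) ≤ V(x) + V(y) for all x, y ≥ 0. Then for every λ > 0 there exists a constant C > 0, depending only on λ, β₁, β₂ and C_V, such that for every r > 0 and every s with 0 < s ≤ λ r, ∫_{{|t| > r}} V(s + t) / (|t| V(|t|)²) dt ≤ C / V(r). -/

import Mathlib

open MeasureTheory Real Filter Topology
open Set
open scoped ENNReal

/-- Let `V` satisfy (V-scaling) on `(0,∞)`, vanish on `(-∞,0]`, and be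
subadditive on `[0,∞)`. Then for every `λ > 0` there is `C > 0` (depending only on
`λ, β₁, β₂, C_V`) such that for every `r > 0` and `0 < s ≤ λ r`,
`∫_{|t|>r} V(s+t)/(|t| V(|t|)²) dt ≤ C / V(r)`. -/
theorem stmt_5 (β₁ β₂ CV : ℝ) (V : ℝ → ℝ)
    (hβ₁ : 0 < β₁) (hββ : β₁ ≤ β₂) (hβ₂ : β₂ < 1) (hCV : 1 ≤ CV)
    (hVpos : ∀ r : ℝ, 0 < r → 0 < V r)
    (hVmono : ∀ r R : ℝ, 0 < r → r ≤ R → V r ≤ V R)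
    (hVS : ∀ r R : ℝ, 0 < r → r ≤ R →
      CV⁻¹ * (R / r) ^ β₁ ≤ V R / V r ∧ V R / V r ≤ CV * (R / r) ^ β₂)
    (hVzero : ∀ u : ℝ, u ≤ 0 → V u = 0)
    (hVsub : ∀ x y : ℝ, 0 ≤ x → 0 ≤ y → V (x + y) ≤ V x + V y) :
    ∀ lam : ℝ, 0 < lam → ∃ C : ℝ, 0 < C ∧ ∀ r s : ℝ, 0 < r → 0 < s → s ≤ lam * r →
      ∫⁻ t in {t : ℝ | r < |t|}, ENNReal.ofReal (V (s + t) / (|t| * (V |t|) ^ 2)) ≤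
        ENNReal.ofReal (C / V r) := by
  intro lam hlam
  have hCV0 : 0 < CV := lt_of_lt_of_le one_pos hCV
  set L : ℝ := max lam 1 with hL
  have hL1 : 1 ≤ L := le_max_right _ _
  have hL0 : 0 < L := lt_of_lt_of_le one_pos hL1
  set K : ℝ := CV * L ^ β₂ + 1 with hK
  have hLb : 0 < L ^ β₂ := rpow_pos_of_pos hL0 _
  have hK0 : 0 < K := by positivity
  refine ⟨CV * L ^ β₂ * lam + K * CV / β₁, by positivity, ?_⟩
  intro r s hr hs hslam
  have hvr : 0 < V r := hVpos r hr
  -- Claim A : V s ≤ CV * L^β₂ * V r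
  have hA : V s ≤ CV * L ^ β₂ * V r := by
    have h1 : V s ≤ V (L * r) := hVmono s (L * r) hs
      (hslam.trans (by nlinarith [le_max_left lam 1]))
    have h2 := (hVS r (L * r) hr (by nlinarith)).2
    rw [show L * r / r = L from mul_div_cancel_right₀ L hr.ne', div_le_iff₀ hvr] at h2
    linarith
  -- split set
  have hset : {t : ℝ | r < |t|} = Iio (-r) ∪ Ioi r := by
    ext t
    simp only [mem_setOf_eq, mem_union, mem_Iio, mem_Ioi, lt_abs]
    constructor
    · rintro (h | h); exacts [Or.inr h, Or.inl (by linarith)]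
    · rintro (h | h); exacts [Or.inr (by linarith), Or.inl h]
  rw [hset, lintegral_union measurableSet_Ioi (by
    rw [Set.disjoint_left]; intro t ht ht'
    simp only [mem_Iio, mem_Ioi] at ht ht'; linarith)]
  set f : ℝ → ℝ≥0∞ := fun t => ENNReal.ofReal (V (s + t) / (|t| * V |t| ^ 2)) with hf
  -- negative part
  have hneg : ∫⁻ t in Iio (-r), f t ≤ ENNReal.ofReal (CV * L ^ β₂ * lam / V r) := by
    have hsub' : Iio (-r) ⊆ Iic (-s) ∪ Ioo (-s) (-r) := by
      intro t ht
      simp only [mem_Iio] at ht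
      rcases le_or_gt t (-s) with h | h
      · exact Or.inl h
      · exact Or.inr ⟨h, ht⟩
    calc ∫⁻ t in Iio (-r), f t
        ≤ ∫⁻ t in Iic (-s) ∪ Ioo (-s) (-r), f t := lintegral_mono_set hsub'
      _ ≤ (∫⁻ t in Iic (-s), f t) + ∫⁻ t in Ioo (-s) (-r), f t := lintegral_union_le _ _ _
      _ ≤ 0 + ENNReal.ofReal (CV * L ^ β₂ * lam / V r) := by
          gcongr
          · -- zero on Iic (-s)
            have : ∫⁻ t in Iic (-s), f t = ∫⁻ _ in Iic (-s), (0 : ℝ≥0∞) := by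
              refine setLIntegral_congr_fun measurableSet_Iic (fun t ht => ?_)
              simp only [mem_Iic] at ht
              rw [hf]
              simp [hVzero (s + t) (by linarith)]
            simp [this]
          · -- bounded on Ioo
            calc ∫⁻ t in Ioo (-s) (-r), f t
                ≤ ∫⁻ _ in Ioo (-s) (-r), ENNReal.ofReal (CV * L ^ β₂ / (r * V r)) := by
                  refine setLIntegral_mono' measurableSet_Ioo fun t ht => ?_
                  obtain ⟨ht1, ht2⟩ := ht
                  have htneg : t < 0 := by linarith
                  have habs : |t| = -t := abs_of_neg htneg
                  have hmt : r < -t := by linarith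
                  have hVmt : 0 < V (-t) := hVpos _ (by linarith)
                  apply ENNReal.ofReal_le_ofReal
                  rw [habs]
                  have hst : 0 < s + t := by linarith
                  have h1 : V (s + t) ≤ CV * L ^ β₂ * V r :=
                    le_trans (hVmono _ _ hst (by linarith)) hA
                  have h2 : r * V r ^ 2 ≤ -t * V (-t) ^ 2 := by
                    have hb := hVmono r (-t) hr hmt.le
                    have hsq : V r ^ 2 ≤ V (-t) ^ 2 := by nlinarith
                    exact mul_le_mul hmt.le hsq (by positivity) (by linarith)
                  calc V (s + t) / (-t * V (-t) ^ 2)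
                      ≤ CV * L ^ β₂ * V r / (r * V r ^ 2) :=
                        div_le_div₀ (by positivity) h1 (by positivity) h2
                    _ = CV * L ^ β₂ / (r * V r) := by field_simp
              _ = ENNReal.ofReal (CV * L ^ β₂ / (r * V r)) * volume (Ioo (-s) (-r)) :=
                  MeasureTheory.setLIntegral_const _ _
              _ ≤ ENNReal.ofReal (CV * L ^ β₂ / (r * V r)) * ENNReal.ofReal (lam * r) := by
                  gcongr
                  rw [Real.volume_Ioo]
                  exact ENNReal.ofReal_le_ofReal (by linarith)
              _ = ENNReal.ofReal (CV * L ^ β₂ * lam / V r) := by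
                  rw [← ENNReal.ofReal_mul (by positivity)]
                  congr 1
                  field_simp
      _ = ENNReal.ofReal (CV * L ^ β₂ * lam / V r) := by rw [zero_add]
  -- positive part
  have hpos : ∫⁻ t in Ioi r, f t ≤ ENNReal.ofReal (K * CV / β₁ / V r) := by
    set D : ℝ := K * CV * r ^ β₁ / V r with hD
    have hD0 : 0 < D := by positivity
    have he : -(1 + β₁) < -1 := by linarith
    calc ∫⁻ t in Ioi r, f t
        ≤ ∫⁻ t in Ioi r, ENNReal.ofReal (D * t ^ (-(1 + β₁))) := by
          refine setLIntegral_mono' measurableSet_Ioi fun t ht => ?_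
          simp only [mem_Ioi] at ht
          have ht0 : 0 < t := hr.trans ht
          have habs : |t| = t := abs_of_pos ht0
          have hvt : 0 < V t := hVpos t ht0
          apply ENNReal.ofReal_le_ofReal
          rw [habs]
          set P : ℝ := t ^ β₁ with hP
          set Q : ℝ := r ^ β₁ with hQ
          have hP0 : 0 < P := rpow_pos_of_pos ht0 _
          have hQ0 : 0 < Q := rpow_pos_of_pos hr _
          -- V(s+t) ≤ K * V t
          have h1 : V (s + t) ≤ K * V t := by
            have := hVsub s t hs.le ht0.le
            have h2 : V s ≤ CV * L ^ β₂ * V t :=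
              hA.trans (mul_le_mul_of_nonneg_left (hVmono r t hr ht.le) (by positivity))
            calc V (s + t) ≤ V s + V t := this
              _ ≤ CV * L ^ β₂ * V t + V t := by linarith
              _ = K * V t := by rw [hK]; ring
          -- P * V r ≤ CV * Q * V t
          have h3 : P * V r ≤ CV * Q * V t := by
            have h := (hVS r t hr ht.le).1
            rw [Real.div_rpow ht0.le hr.le] at h
            have h4 := mul_le_mul_of_nonneg_right h (by positivity : (0:ℝ) ≤ CV * Q * V r)
            calc P * V r = CV⁻¹ * (P / Q) * (CV * Q * V r) := by
                  field_simp
              _ ≤ V t / V r * (CV * Q * V r) := h4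
              _ = CV * Q * V t := by field_simp
          have hrw : t ^ (-(1 + β₁)) = (t * P)⁻¹ := by
            rw [Real.rpow_neg ht0.le, Real.rpow_add ht0, Real.rpow_one]
          rw [hrw, hD, mul_comm (K * CV * r ^ β₁ / V r) _, ← div_eq_inv_mul, div_div,
            div_le_div_iff₀ (by positivity) (by positivity)]
          calc V (s + t) * (V r * (t * P))
              ≤ (K * V t) * (V r * (t * P)) :=
                mul_le_mul_of_nonneg_right h1 (by positivity)
            _ = (K * (P * V r)) * (t * V t) := by ring
            _ ≤ (K * (CV * Q * V t)) * (t * V t) :=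
                mul_le_mul_of_nonneg_right
                  (mul_le_mul_of_nonneg_left h3 hK0.le) (by positivity)
            _ = K * CV * Q * (t * V t ^ 2) := by ring
      _ = ENNReal.ofReal (∫ t in Ioi r, D * t ^ (-(1 + β₁))) := by
          rw [ofReal_integral_eq_lintegral_ofReal]
          · exact (integrableOn_Ioi_rpow_of_lt he hr).const_mul D
          · refine (ae_restrict_iff' measurableSet_Ioi).2 (ae_of_all _ fun t ht => ?_)
            have ht0 : 0 < t := hr.trans ht
            positivity
      _ = ENNReal.ofReal (K * CV / β₁ / V r) := by
          congr 1
          rw [integral_const_mul, integral_Ioi_rpow_of_lt he hr]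
          have : -(1 + β₁) + 1 = -β₁ := by ring
          rw [this, hD, Real.rpow_neg hr.le]
          have hq : (r:ℝ) ^ β₁ ≠ 0 := (rpow_pos_of_pos hr _).ne'
          field_simp
  calc (∫⁻ t in Iio (-r), f t) + ∫⁻ t in Ioi r, f t
      ≤ ENNReal.ofReal (CV * L ^ β₂ * lam / V r) + ENNReal.ofReal (K * CV / β₁ / V r) :=
        add_le_add hneg hpos
    _ = ENNReal.ofReal ((CV * L ^ β₂ * lam + K * CV / β₁) / V r) := by
        rw [← ENNReal.ofReal_add (by positivity) (by positivity), ← add_div]
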